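/- There exist ν₋ < 0 < ν₊ such that for every ν ∈ [ν₋, 0] and every solution u of u' = G_ν(u) with u(0) ∈ S_{ν₊}, either u leaves S_{ν₊} at some finite forward time, or u(t) → (0, 0, 0) as t → ∞. -/

import Mathlib

open Set

open Set Filter Topology

/-- If `f = b` implies `f' ≥ c > 0`, and `f T ≥ b`, then `f ≥ b` forever after. -/
lemma stayAbove {f d : ℝ → ℝ} {T b c : ℝ} (hc : 0 < c)
    (hd : ∀ t ≥ T, HasDerivAt f (d t) t)
    (hbar : ∀ t ≥ T, f t = b → c ≤ d t)
    (h0 : b ≤ f T) : ∀ t ≥ T, b ≤ f t := by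
  intro t₂ ht₂
  by_contra hlt
  push_neg at hlt
  have hcont : ContinuousOn f (Icc T t₂) := fun t ht =>
    ((hd t ht.1).continuousAt).continuousWithinAt
  set A : Set ℝ := Icc T t₂ ∩ f ⁻¹' (Ici b) with hA
  have hAclosed : IsClosed A :=
    hcont.preimage_isClosed_of_isClosed isClosed_Icc isClosed_Ici
  have hAcomp : IsCompact A :=
    isCompact_Icc.of_isClosed_subset hAclosed inter_subset_left
  have hTA : T ∈ A := ⟨⟨le_refl T, ht₂⟩, h0⟩
  obtain ⟨τ, hτA⟩ : ∃ τ, τ ∈ A ∧ τ = sSup A := ⟨sSup A, hAcomp.sSup_mem ⟨T, hTA⟩, rfl⟩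
  obtain ⟨⟨⟨hτT, hτt₂⟩, hfτ⟩, hτsup⟩ := hτA
  have hτlt : τ < t₂ := lt_of_le_of_ne hτt₂ (by rintro rfl; exact absurd hfτ (not_le.2 hlt))
  have hbdd : BddAbove A := hAcomp.bddAbove
  have hIoc : ∀ s ∈ Ioc τ t₂, f s < b := by
    intro s hs
    by_contra hfs
    push_neg at hfs
    have hsA : s ∈ A := ⟨⟨le_trans hτT (le_of_lt hs.1), hs.2⟩, hfs⟩
    have := le_csSup hbdd hsA
    rw [← hτsup] at this
    exact absurd hs.1 (not_lt.2 this)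
  -- f τ = b
  have hmem : Ioc τ t₂ ∈ 𝓝[>] τ := Ioc_mem_nhdsGT_of_mem ⟨le_refl τ, hτlt⟩
  have hfcont : Tendsto f (𝓝[>] τ) (𝓝 (f τ)) :=
    ((hd τ hτT).continuousAt).continuousWithinAt.tendsto
  have hfτle : f τ ≤ b := by
    refine le_of_tendsto hfcont ?_
    filter_upwards [hmem] with s hs using le_of_lt (hIoc s hs)
  have hfτb : f τ = b := le_antisymm hfτle hfτ
  -- derivative positive at τ gives contradiction
  have hdτ : c ≤ d τ := hbar τ hτT hfτb
  have hslope : Tendsto (slope f τ) (𝓝[>] τ) (𝓝 (d τ)) :=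
    (hasDerivAt_iff_tendsto_slope.1 (hd τ hτT)).mono_left
      (nhdsWithin_mono τ (fun s hs => ne_of_gt hs))
  have hev : ∀ᶠ s in 𝓝[>] τ, 0 < slope f τ s :=
    hslope (Ioi_mem_nhds (lt_of_lt_of_le hc hdτ))
  obtain ⟨s, hs1, hs2⟩ := (hev.and hmem).exists
  have hsub : 0 < s - τ := sub_pos.2 hs2.1
  have : 0 < (f s - f τ) / (s - τ) := by
    have := hs1
    rwa [slope_def_field] at this
  have hfs : f τ < f s := by
    have := mul_pos this hsub
    rw [div_mul_cancel₀] at this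
    · linarith
    · exact ne_of_gt hsub
  have := hIoc s hs2
  rw [hfτb] at hfs
  linarith

/-- A derivative lower bound gives linear growth. -/
lemma growLin {f d : ℝ → ℝ} {T c : ℝ}
    (hd : ∀ t ≥ T, HasDerivAt f (d t) t)
    (hc : ∀ t ≥ T, c ≤ d t) : ∀ t ≥ T, f T + c * (t - T) ≤ f t := by
  have hmono : MonotoneOn (fun t => f t - c * t) (Ici T) := by
    apply monotoneOn_of_hasDerivWithinAt_nonneg (convex_Ici T)
      (f' := fun t => d t - c)
    · intro t ht
      exact ((hd t ht).sub ((hasDerivAt_id t).const_mul c)).continuousAt.continuousWithinAt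
    · intro t ht
      rw [interior_Ici] at ht
      have := ((hd t (le_of_lt ht)).sub ((hasDerivAt_id t).const_mul c))
      exact this.hasDerivWithinAt.congr_deriv (by ring)
    · intro t ht
      rw [interior_Ici] at ht
      have := hc t (le_of_lt ht)
      linarith
  intro t ht
  have := hmono (self_mem_Ici) ht ht
  simp only at this
  linarith

/-- Repelling barrier plus upper bound: `f` can never reach the barrier `b`. -/
lemma belowBarrier {f d : ℝ → ℝ} {T b c : ℝ} (hc : 0 < c) (hb : 0 ≤ b)
    (hd : ∀ t ≥ T, HasDerivAt f (d t) t)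
    (hbar : ∀ t ≥ T, b ≤ f t → c ≤ d t)
    (hub : ∀ t ≥ T, f t ≤ 1) : ∀ t ≥ T, f t ≤ b := by
  intro t₀ ht₀
  by_contra hgt
  push_neg at hgt
  have hstay : ∀ t ≥ t₀, b ≤ f t :=
    stayAbove hc (fun t ht => hd t (le_trans ht₀ ht))
      (fun t ht hft => hbar t (le_trans ht₀ ht) (le_of_eq hft.symm)) (le_of_lt hgt)
  have hgrow : ∀ t ≥ t₀, f t₀ + c * (t - t₀) ≤ f t :=
    growLin (fun t ht => hd t (le_trans ht₀ ht))
      (fun t ht => hbar t (le_trans ht₀ ht) (hstay t ht))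
  have h2 : t₀ ≤ t₀ + 2 / c := by
    have : 0 ≤ 2 / c := by positivity
    linarith
  have := hgrow (t₀ + 2 / c) (by linarith)
  have h3 : f (t₀ + 2 / c) ≤ 1 := hub _ (by linarith)
  have h4 : c * (t₀ + 2 / c - t₀) = 2 := by
    field_simp
    ring
  rw [h4] at this
  linarith

/-- Attracting barrier from below: once below `b`, stay below. -/
lemma stayBelow {f d : ℝ → ℝ} {T b c : ℝ} (hc : 0 < c)
    (hd : ∀ t ≥ T, HasDerivAt f (d t) t)
    (hbar : ∀ t ≥ T, f t = b → d t ≤ -c)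
    (h0 : f T ≤ b) : ∀ t ≥ T, f t ≤ b := by
  intro t ht
  have h := stayAbove (f := fun s => -f s) (d := fun s => -d s) (b := -b) hc
    (fun s hs => (hd s hs).neg)
    (fun s hs hfs => by
      have hfb : f s = b := by linarith
      linarith [hbar s hs hfb])
    (by linarith) t ht
  linarith

/-- Decay towards an attracting barrier: eventually below `b`, forever. -/
lemma comeDown {f d : ℝ → ℝ} {T b c : ℝ} (hc : 0 < c)
    (hd : ∀ t ≥ T, HasDerivAt f (d t) t)
    (hbar : ∀ t ≥ T, b ≤ f t → d t ≤ -c)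
    (hlb : ∀ t ≥ T, -1 ≤ f t) : ∃ T' ≥ T, ∀ t ≥ T', f t ≤ b := by
  have hhit : ∃ t₁ ≥ T, f t₁ ≤ b := by
    by_contra h
    push_neg at h
    have hdneg : ∀ t ≥ T, c ≤ -d t := by
      intro t ht
      have := hbar t ht (le_of_lt (h t ht))
      linarith
    have hgrow : ∀ t ≥ T, -f T + c * (t - T) ≤ -f t :=
      growLin (f := fun t => -f t) (d := fun t => -d t)
        (fun t ht => (hd t ht).neg) hdneg
    have h2 : T ≤ T + (f T + 2) / c := by
      have : -1 ≤ f T := hlb T (le_refl T)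
      have : 0 ≤ (f T + 2) / c := div_nonneg (by linarith) (le_of_lt hc)
      linarith
    have := hgrow (T + (f T + 2) / c) h2
    have h3 : -1 ≤ f (T + (f T + 2) / c) := hlb _ h2
    have h4 : c * (T + (f T + 2) / c - T) = f T + 2 := by
      field_simp
      ring
    rw [h4] at this
    linarith
  obtain ⟨t₁, ht₁, hft₁⟩ := hhit
  refine ⟨t₁, ht₁, stayBelow hc (fun t ht => hd t (le_trans ht₁ ht))
    (fun t ht hft => hbar t (le_trans ht₁ ht) (le_of_eq hft.symm)) hft₁⟩

/-- For the unstable equation `f' = f + e` with `|e| ≤ κ|f| + m`, `κ ≤ 1/2`,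
boundedness of `f` forces `|f| ≤ 4m` at all times. -/
lemma unstableBound {f e : ℝ → ℝ} {T κ m : ℝ} (hκ0 : 0 ≤ κ) (hκ : κ ≤ 1/2) (hm : 0 < m)
    (hd : ∀ t ≥ T, HasDerivAt f (f t + e t) t)
    (he : ∀ t ≥ T, |e t| ≤ κ * |f t| + m)
    (hb : ∀ t ≥ T, |f t| ≤ 1) :
    ∀ t ≥ T, |f t| ≤ 4 * m := by
  have hub : ∀ t ≥ T, f t ≤ 4 * m := by
    apply belowBarrier hm (by linarith) hd
    · intro t ht hft
      have hepos : 0 ≤ f t := by linarith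
      have he1 := (abs_le.1 (he t ht)).1
      rw [abs_of_nonneg hepos] at he1
      have hκf : κ * f t ≤ (1/2) * f t := mul_le_mul_of_nonneg_right hκ hepos
      linarith
    · intro t ht
      exact (abs_le.1 (hb t ht)).2
  have hlb : ∀ t ≥ T, -f t ≤ 4 * m := by
    apply belowBarrier (f := fun t => -f t) (d := fun t => -(f t + e t)) hm (by linarith)
      (fun t ht => (hd t ht).neg)
    · intro t ht hft
      have heneg : f t ≤ 0 := by linarith
      have he1 := (abs_le.1 (he t ht)).2
      rw [abs_of_nonpos heneg] at he1
      have hκf : κ * (-f t) ≤ (1/2) * (-f t) := mul_le_mul_of_nonneg_right hκ (by linarith)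
      linarith
    · intro t ht
      show -f t ≤ 1
      linarith [(abs_le.1 (hb t ht)).1]
  intro t ht
  exact abs_le.2 ⟨by linarith [hlb t ht], hub t ht⟩

/-- For the stable equation `f' = -f + e` with `|e| ≤ κ|f| + m`, `κ ≤ 1/2`,
eventually `|f| ≤ 4m`. -/
lemma stableBound {f e : ℝ → ℝ} {T κ m : ℝ} (hκ0 : 0 ≤ κ) (hκ : κ ≤ 1/2) (hm : 0 < m)
    (hd : ∀ t ≥ T, HasDerivAt f (-f t + e t) t)
    (he : ∀ t ≥ T, |e t| ≤ κ * |f t| + m)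
    (hb : ∀ t ≥ T, |f t| ≤ 1) :
    ∃ T' ≥ T, ∀ t ≥ T', |f t| ≤ 4 * m := by
  obtain ⟨T₁, hT₁, hub⟩ : ∃ T' ≥ T, ∀ t ≥ T', f t ≤ 4 * m := by
    apply comeDown hm hd
    · intro t ht hft
      have hepos : 0 ≤ f t := by linarith
      have he1 := (abs_le.1 (he t ht)).2
      rw [abs_of_nonneg hepos] at he1
      have hκf : κ * f t ≤ (1/2) * f t := mul_le_mul_of_nonneg_right hκ hepos
      linarith
    · intro t ht
      linarith [(abs_le.1 (hb t ht)).1]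
  obtain ⟨T₂, hT₂, hlb⟩ : ∃ T' ≥ T, ∀ t ≥ T', -f t ≤ 4 * m := by
    apply comeDown (f := fun t => -f t) (d := fun t => -(-f t + e t)) hm
      (fun t ht => (hd t ht).neg)
    · intro t ht hft
      have heneg : f t ≤ 0 := by linarith
      have he1 := (abs_le.1 (he t ht)).1
      rw [abs_of_nonpos heneg] at he1
      have hκf : κ * (-f t) ≤ (1/2) * (-f t) := mul_le_mul_of_nonneg_right hκ (by linarith)
      linarith
    · intro t ht
      show -1 ≤ -f t
      linarith [(abs_le.1 (hb t ht)).2]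
  refine ⟨max T₁ T₂, le_trans hT₁ (le_max_left _ _), fun t ht => ?_⟩
  exact abs_le.2 ⟨by linarith [hlb t (le_trans (le_max_right _ _) ht)],
    hub t (le_trans (le_max_left _ _) ht)⟩

/-- Bound on the coupling term, using bounds on `X` and `Z`. -/
lemma eBoundY {X Y Z dX dZ : ℝ} (hX : |X| ≤ dX) (hZ : |Z| ≤ dZ) :
    |X^2*(Y+Z) + X^4 + Y*Z| ≤ (dX^2 + dZ) * |Y| + (dX^2*dZ + dX^4) := by
  have h0X : 0 ≤ |X| := abs_nonneg X
  have h0Y : 0 ≤ |Y| := abs_nonneg Y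
  have h0Z : 0 ≤ |Z| := abs_nonneg Z
  have h1 : |X^2*(Y+Z) + X^4 + Y*Z| ≤ |X|^2*(|Y|+|Z|) + |X|^4 + |Y| * |Z| := by
    calc |X^2*(Y+Z) + X^4 + Y*Z| ≤ |X^2*(Y+Z) + X^4| + |Y*Z| := abs_add_le _ _
    _ ≤ |X^2*(Y+Z)| + |X^4| + |Y*Z| := by linarith [abs_add_le (X^2*(Y+Z)) (X^4)]
    _ ≤ |X|^2*(|Y|+|Z|) + |X|^4 + |Y| * |Z| := by
        rw [abs_mul, abs_mul, abs_pow, abs_pow]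
        have := abs_add_le Y Z
        nlinarith [pow_nonneg h0X 2]
  have h2 : |X|^2 ≤ dX^2 := by nlinarith
  have h4 : |X|^4 ≤ dX^4 := by nlinarith
  nlinarith [mul_le_mul_of_nonneg_left hZ (pow_nonneg h0X 2), mul_le_mul_of_nonneg_left hZ h0Y,
    mul_le_mul_of_nonneg_right h2 h0Y]

/-- Bound on the coupling term, using bounds on `X` and `Y`. -/
lemma eBoundZ {X Y Z dX dY : ℝ} (hX : |X| ≤ dX) (hY : |Y| ≤ dY) :
    |X^2*(Y+Z) + X^4 + Y*Z| ≤ (dX^2 + dY) * |Z| + (dX^2*dY + dX^4) := by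
  have h0X : 0 ≤ |X| := abs_nonneg X
  have h0Y : 0 ≤ |Y| := abs_nonneg Y
  have h0Z : 0 ≤ |Z| := abs_nonneg Z
  have h1 : |X^2*(Y+Z) + X^4 + Y*Z| ≤ |X|^2*(|Y|+|Z|) + |X|^4 + |Y| * |Z| := by
    calc |X^2*(Y+Z) + X^4 + Y*Z| ≤ |X^2*(Y+Z) + X^4| + |Y*Z| := abs_add_le _ _
    _ ≤ |X^2*(Y+Z)| + |X^4| + |Y*Z| := by linarith [abs_add_le (X^2*(Y+Z)) (X^4)]
    _ ≤ |X|^2*(|Y|+|Z|) + |X|^4 + |Y| * |Z| := by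
        rw [abs_mul, abs_mul, abs_pow, abs_pow]
        have := abs_add_le Y Z
        nlinarith [pow_nonneg h0X 2]
  have h2 : |X|^2 ≤ dX^2 := by nlinarith
  have h4 : |X|^4 ≤ dX^4 := by nlinarith
  nlinarith [mul_le_mul_of_nonneg_left hY (pow_nonneg h0X 2), mul_le_mul_of_nonneg_right hY h0Z,
    mul_le_mul_of_nonneg_right h2 h0Z]

lemma abs_le_of_sq_le {a b : ℝ} (hb : 0 ≤ b) (h : a^2 ≤ b^2) : |a| ≤ b := by
  nlinarith [sq_abs a, abs_nonneg a]

/-- Decay of the `x`-component: if `|x| ≤ d` and `|y|,|z| ≤ 9 d⁴` from time `T` on,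
then eventually `|x| ≤ d²`. -/
lemma stageX {x y z : ℝ → ℝ} {ν T d : ℝ} (hν : ν ≤ 0) (hd0 : 0 < d) (hd1 : d ≤ 1/1000)
    (hdx : ∀ t ≥ T, HasDerivAt x
      (x t * (ν - x t ^ 2) + x t ^ 3 * (y t + z t) + x t * (y t ^ 2 + z t ^ 2) + y t * z t) t)
    (hx : ∀ t ≥ T, |x t| ≤ d) (hy : ∀ t ≥ T, |y t| ≤ 9 * d ^ 4)
    (hz : ∀ t ≥ T, |z t| ≤ 9 * d ^ 4) :
    ∃ T' ≥ T, ∀ t ≥ T', |x t| ≤ d ^ 2 := by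
  have key : ∃ T' ≥ T, ∀ t ≥ T', x t ^ 2 ≤ d ^ 4 := by
    apply comeDown (f := fun t => x t ^ 2)
      (d := fun t => 2 * x t *
        (x t * (ν - x t ^ 2) + x t ^ 3 * (y t + z t) + x t * (y t ^ 2 + z t ^ 2) + y t * z t))
      (c := d ^ 8) (by positivity)
    · intro t ht
      have h := (hdx t ht).pow 2
      have h2 : HasDerivAt (fun t => x t ^ 2)
          (2 * x t * (x t * (ν - x t ^ 2) + x t ^ 3 * (y t + z t)
            + x t * (y t ^ 2 + z t ^ 2) + y t * z t)) t := by
        refine h.congr_deriv ?_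
        push_cast
        ring
      exact h2
    · intro t ht hb
      set X := x t with hX
      set Y := y t with hYd
      set Z := z t with hZd
      have hXd : |X| ≤ d := hx t ht
      have hY : |Y| ≤ 9 * d ^ 4 := hy t ht
      have hZ : |Z| ≤ 9 * d ^ 4 := hz t ht
      have hX4nn : (0:ℝ) ≤ X ^ 4 := by positivity
      have hX2nn : (0:ℝ) ≤ X ^ 2 := by positivity
      have hX4 : d ^ 8 ≤ X ^ 4 := by
        nlinarith [mul_self_le_mul_self (show (0:ℝ) ≤ d ^ 4 by positivity) hb]
      have t0 : 2 * ν * X ^ 2 ≤ 0 := by nlinarith [hX2nn]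
      have hYZ : Y + Z ≤ 18 * d ^ 4 := by linarith [(abs_le.1 hY).2, (abs_le.1 hZ).2]
      have t2 : 2 * X ^ 4 * (Y + Z) ≤ 36 * d ^ 4 * X ^ 4 := by
        nlinarith [mul_le_mul_of_nonneg_left hYZ (show (0:ℝ) ≤ 2 * X ^ 4 by positivity)]
      have hY2 : Y ^ 2 ≤ 81 * d ^ 8 := by nlinarith [abs_nonneg Y, sq_abs Y]
      have hZ2 : Z ^ 2 ≤ 81 * d ^ 8 := by nlinarith [abs_nonneg Z, sq_abs Z]
      have hdX : d ^ 8 * X ^ 2 ≤ d ^ 4 * X ^ 4 := by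
        nlinarith [mul_le_mul_of_nonneg_left hb (show (0:ℝ) ≤ d ^ 4 * X ^ 2 by positivity)]
      have t3 : 2 * X ^ 2 * (Y ^ 2 + Z ^ 2) ≤ 324 * d ^ 4 * X ^ 4 := by
        nlinarith [mul_le_mul_of_nonneg_left (show Y ^ 2 + Z ^ 2 ≤ 162 * d ^ 8 by linarith)
          (show (0:ℝ) ≤ 2 * X ^ 2 by positivity), hdX]
      have hYZabs : |Y| * |Z| ≤ 81 * d ^ 8 := by nlinarith [abs_nonneg Y, abs_nonneg Z]
      have hXYZ : |X| * (|Y| * |Z|) ≤ d * (81 * d ^ 8) :=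
        mul_le_mul hXd hYZabs (by positivity) (le_of_lt hd0)
      have t4 : 2 * X * (Y * Z) ≤ 162 * d * X ^ 4 := by
        have h1 : 2 * X * (Y * Z) ≤ 2 * (|X| * (|Y| * |Z|)) := by
          have := le_abs_self (X * (Y * Z))
          rw [abs_mul, abs_mul] at this
          linarith
        have h2 : 162 * (d * d ^ 8) ≤ 162 * (d * X ^ 4) :=
          mul_le_mul_of_nonneg_left (mul_le_mul_of_nonneg_left hX4 (le_of_lt hd0)) (by norm_num)
        linarith
      have hsmall : 360 * d ^ 4 + 162 * d ≤ 1 := by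
        have h4 : d ^ 4 ≤ d := pow_le_of_le_one (le_of_lt hd0) (by linarith) (by norm_num)
        linarith
      have hcoef : 36 * d ^ 4 * X ^ 4 + 324 * d ^ 4 * X ^ 4 + 162 * d * X ^ 4 ≤ X ^ 4 := by
        have := mul_le_mul_of_nonneg_right hsmall hX4nn
        linarith
      have hexp : 2 * X *
          (X * (ν - X ^ 2) + X ^ 3 * (Y + Z) + X * (Y ^ 2 + Z ^ 2) + Y * Z)
          = 2 * ν * X ^ 2 - 2 * X ^ 4 + 2 * X ^ 4 * (Y + Z) + 2 * X ^ 2 * (Y ^ 2 + Z ^ 2)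
            + 2 * X * (Y * Z) := by ring
      rw [hexp]
      linarith
    · intro t ht
      show (-1:ℝ) ≤ x t ^ 2
      nlinarith [sq_nonneg (x t)]
  obtain ⟨T', hT', h⟩ := key
  refine ⟨T', hT', fun t ht => abs_le_of_sq_le (by positivity) ?_⟩
  have := h t ht
  linarith

/-- One full bootstrap stage: bounds at scale `d` improve to scale `d²`. -/
lemma fullStage {x y z : ℝ → ℝ} {ν T d : ℝ} (hν : ν ≤ 0) (hd0 : 0 < d) (hd1 : d ≤ 1/1000)
    (hdx : ∀ t ≥ T, HasDerivAt x
      (x t * (ν - x t ^ 2) + x t ^ 3 * (y t + z t) + x t * (y t ^ 2 + z t ^ 2) + y t * z t) t)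
    (hdy : ∀ t ≥ T, HasDerivAt y
      (y t + (x t ^ 2 * (y t + z t) + x t ^ 4 + y t * z t)) t)
    (hdz : ∀ t ≥ T, HasDerivAt z
      (-z t + (x t ^ 2 * (y t + z t) + x t ^ 4 + y t * z t)) t)
    (hby : ∀ t ≥ T, |y t| ≤ 1) (hbz : ∀ t ≥ T, |z t| ≤ 1)
    (hx : ∀ t ≥ T, |x t| ≤ d) (hy : ∀ t ≥ T, |y t| ≤ 9 * d ^ 4)
    (hz : ∀ t ≥ T, |z t| ≤ 9 * d ^ 4) :
    ∃ T' ≥ T, (∀ t ≥ T', |x t| ≤ d ^ 2) ∧ (∀ t ≥ T', |y t| ≤ 9 * (d ^ 2) ^ 4) ∧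
      (∀ t ≥ T', |z t| ≤ 9 * (d ^ 2) ^ 4) := by
  have hd4 : (0:ℝ) < d ^ 4 := by positivity
  have hd1' : d ≤ 1 := by linarith
  have hdpow : ∀ n : ℕ, n ≠ 0 → d ^ n ≤ d := fun n hn => pow_le_of_le_one (le_of_lt hd0) hd1' hn
  -- step 1 : improve x
  obtain ⟨T₁, hT₁, hx₁⟩ := stageX hν hd0 hd1 hdx hx hy hz
  have ge₁ : ∀ t : ℝ, t ≥ T₁ → t ≥ T := fun t ht => le_trans hT₁ ht
  -- step 2 : y at scale 40 d⁸
  have hy₁ : ∀ t ≥ T₁, |y t| ≤ 40 * d ^ 8 := by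
    have h := unstableBound (f := y)
      (e := fun t => x t ^ 2 * (y t + z t) + x t ^ 4 + y t * z t)
      (T := T₁) (κ := (d^2)^2 + 9*d^4) (m := (d^2)^2*(9*d^4) + (d^2)^4)
      (by positivity)
      (by nlinarith [hdpow 4 (by norm_num)])
      (by positivity)
      (fun t ht => hdy t (ge₁ t ht))
      (fun t ht => eBoundY (hx₁ t ht) (hz t (ge₁ t ht)))
      (fun t ht => hby t (ge₁ t ht))
    intro t ht
    have := h t ht
    nlinarith [this]
  -- step 3 : z at scale 5 d⁸
  obtain ⟨T₂, hT₂, hz₂'⟩ := stableBound (f := z)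
      (e := fun t => x t ^ 2 * (y t + z t) + x t ^ 4 + y t * z t)
      (T := T₁) (κ := (d^2)^2 + 40*d^8) (m := (d^2)^2*(40*d^8) + (d^2)^4)
      (by positivity)
      (by nlinarith [hdpow 4 (by norm_num), hdpow 8 (by norm_num)])
      (by positivity)
      (fun t ht => hdz t (ge₁ t ht))
      (fun t ht => eBoundZ (hx₁ t ht) (hy₁ t ht))
      (fun t ht => hbz t (ge₁ t ht))
  have ge₂ : ∀ t : ℝ, t ≥ T₂ → t ≥ T₁ := fun t ht => le_trans hT₂ ht
  have hz₂ : ∀ t ≥ T₂, |z t| ≤ 5 * d ^ 8 := by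
    intro t ht
    have := hz₂' t ht
    have h1 : d ^ 4 ≤ 1/1000 := le_trans (hdpow 4 (by norm_num)) hd1
    have h2 : (d^2)^2 * (40*d^8) ≤ (1/1000) * (40*d^8) :=
      mul_le_mul_of_nonneg_right (by linarith) (by positivity)
    have h3 : (0:ℝ) ≤ d ^ 8 := by positivity
    linarith
  -- step 4 : y at scale 5 d⁸
  have hy₂ : ∀ t ≥ T₂, |y t| ≤ 5 * d ^ 8 := by
    have h := unstableBound (f := y)
      (e := fun t => x t ^ 2 * (y t + z t) + x t ^ 4 + y t * z t)
      (T := T₂) (κ := (d^2)^2 + 5*d^8) (m := (d^2)^2*(5*d^8) + (d^2)^4)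
      (by positivity)
      (by nlinarith [hdpow 4 (by norm_num), hdpow 8 (by norm_num)])
      (by positivity)
      (fun t ht => hdy t (ge₁ t (ge₂ t ht)))
      (fun t ht => eBoundY (hx₁ t (ge₂ t ht)) (hz₂ t ht))
      (fun t ht => hby t (ge₁ t (ge₂ t ht)))
    intro t ht
    have := h t ht
    have h1 : d ^ 4 ≤ 1/1000 := le_trans (hdpow 4 (by norm_num)) hd1
    have h2 : (d^2)^2 * (5*d^8) ≤ (1/1000) * (5*d^8) :=
      mul_le_mul_of_nonneg_right (by linarith) (by positivity)
    have h3 : (0:ℝ) ≤ d ^ 8 := by positivity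
    linarith
  refine ⟨T₂, le_trans hT₁ hT₂, fun t ht => hx₁ t (ge₂ t ht), ?_, ?_⟩
  · intro t ht
    have := hy₂ t ht
    have h58 : (5:ℝ) * d ^ 8 ≤ 9 * (d ^ 2) ^ 4 := by nlinarith [hd4]
    linarith
  · intro t ht
    have := hz₂ t ht
    have h58 : (5:ℝ) * d ^ 8 ≤ 9 * (d ^ 2) ^ 4 := by nlinarith [hd4]
    linarith

/-- The base stage: from the box bounds to the `(d, 9 d⁴)` regime. -/
lemma baseStage {x y z : ℝ → ℝ} {T d : ℝ} (hd0 : 0 < d) (hd1 : d ≤ 1/1000)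
    (hdy : ∀ t ≥ T, HasDerivAt y
      (y t + (x t ^ 2 * (y t + z t) + x t ^ 4 + y t * z t)) t)
    (hdz : ∀ t ≥ T, HasDerivAt z
      (-z t + (x t ^ 2 * (y t + z t) + x t ^ 4 + y t * z t)) t)
    (hx : ∀ t ≥ T, |x t| ≤ d) (hy : ∀ t ≥ T, |y t| ≤ d ^ 3)
    (hz : ∀ t ≥ T, |z t| ≤ d ^ 3) :
    ∃ T' ≥ T, (∀ t ≥ T', |y t| ≤ 9 * d ^ 4) ∧ (∀ t ≥ T', |z t| ≤ 9 * d ^ 4) := by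
  have hd1' : d ≤ 1 := by linarith
  have hdpow : ∀ n : ℕ, n ≠ 0 → d ^ n ≤ d := fun n hn => pow_le_of_le_one (le_of_lt hd0) hd1' hn
  have hby : ∀ t ≥ T, |y t| ≤ 1 := fun t ht => le_trans (hy t ht)
    (by linarith [hdpow 3 (by norm_num)])
  have hbz : ∀ t ≥ T, |z t| ≤ 1 := fun t ht => le_trans (hz t ht)
    (by linarith [hdpow 3 (by norm_num)])
  have hy₁ : ∀ t ≥ T, |y t| ≤ 8 * d ^ 4 := by
    have h := unstableBound (f := y)
      (e := fun t => x t ^ 2 * (y t + z t) + x t ^ 4 + y t * z t)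
      (T := T) (κ := d^2 + d^3) (m := d^2*d^3 + d^4)
      (by positivity)
      (by nlinarith [hdpow 2 (by norm_num), hdpow 3 (by norm_num)])
      (by positivity) hdy
      (fun t ht => eBoundY (hx t ht) (hz t ht)) hby
    intro t ht
    have := h t ht
    have h2 : d * d^4 ≤ 1 * d^4 :=
      mul_le_mul_of_nonneg_right hd1' (by positivity)
    linarith
  obtain ⟨T', hT', hz'⟩ := stableBound (f := z)
      (e := fun t => x t ^ 2 * (y t + z t) + x t ^ 4 + y t * z t)
      (T := T) (κ := d^2 + 8*d^4) (m := d^2*(8*d^4) + d^4)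
      (by positivity)
      (by nlinarith [hdpow 2 (by norm_num), hdpow 4 (by norm_num)])
      (by positivity) hdz
      (fun t ht => eBoundZ (hx t ht) (hy₁ t ht)) hbz
  refine ⟨T', hT', fun t ht => ?_, fun t ht => ?_⟩
  · have := hy₁ t (le_trans hT' ht)
    have : (0:ℝ) ≤ d ^ 4 := by positivity
    linarith [hy₁ t (le_trans hT' ht)]
  · have := hz' t ht
    have h1 : d ^ 2 ≤ 1/1000 := le_trans (hdpow 2 (by norm_num)) hd1
    have h2 : d^2 * (8*d^4) ≤ (1/1000) * (8*d^4) :=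
      mul_le_mul_of_nonneg_right h1 (by positivity)
    have h3 : (0:ℝ) ≤ d ^ 4 := by positivity
    linarith

/-- The bootstrap scale sequence. -/
noncomputable def dseq : ℕ → ℝ
  | 0 => 1/1000
  | n+1 => (dseq n)^2

lemma dseq_pos : ∀ n, 0 < dseq n := by
  intro n
  induction n with
  | zero => norm_num [dseq]
  | succ n ih => rw [dseq]; positivity

lemma dseq_le : ∀ n, dseq n ≤ 1/1000 := by
  intro n
  induction n with
  | zero => norm_num [dseq]
  | succ n ih =>
    rw [dseq]
    nlinarith [dseq_pos n]

lemma dseq_small : ∀ n, dseq n ≤ (1/1000 : ℝ) ^ (n+1) := by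
  intro n
  induction n with
  | zero => norm_num [dseq]
  | succ n ih =>
    rw [dseq]
    have h1 := dseq_pos n
    have h2 := dseq_le n
    calc dseq n ^ 2 = dseq n * dseq n := sq (dseq n) ▸ by ring
    _ ≤ (1/1000 : ℝ) ^ (n+1) * (1/1000) := by
        apply mul_le_mul ih h2 (le_of_lt h1) (by positivity)
    _ = (1/1000 : ℝ) ^ (n+2) := by ring

/-- The vector field in `ℝ³`:
`G_ν(x,y,z) = (x(ν − x²) + x³(y+z) + x(y²+z²) + yz, y + x²(y+z) + x⁴ + yz, −z + x²(y+z) + x⁴ + yz)`. -/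
noncomputable def G (ν : ℝ) (p : ℝ × ℝ × ℝ) : ℝ × ℝ × ℝ :=
  (p.1 * (ν - p.1 ^ 2) + p.1 ^ 3 * (p.2.1 + p.2.2) + p.1 * (p.2.1 ^ 2 + p.2.2 ^ 2)
      + p.2.1 * p.2.2,
   p.2.1 + p.1 ^ 2 * (p.2.1 + p.2.2) + p.1 ^ 4 + p.2.1 * p.2.2,
   -p.2.2 + p.1 ^ 2 * (p.2.1 + p.2.2) + p.1 ^ 4 + p.2.1 * p.2.2)

/-- The box `S_θ = [−√(2θ), √(2θ)] × [−θ^{3/2}, θ^{3/2}] × [−θ^{3/2}, θ^{3/2}]`. -/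
noncomputable def S (θ : ℝ) : Set (ℝ × ℝ × ℝ) :=
  Icc (-Real.sqrt (2 * θ)) (Real.sqrt (2 * θ)) ×ˢ
    (Icc (-θ ^ ((3 : ℝ) / 2)) (θ ^ ((3 : ℝ) / 2)) ×ˢ
      Icc (-θ ^ ((3 : ℝ) / 2)) (θ ^ ((3 : ℝ) / 2)))

/-- There exist `ν₋ < 0 < ν₊` such that for every `ν ∈ [ν₋, 0]` and every forward
solution `u` of `u' = G_ν(u)` with `u 0 ∈ S_{ν₊}`, either `u` leaves `S_{ν₊}` at some
finite forward time, or `u t → (0,0,0)` as `t → ∞`. -/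
theorem stmt12 :
    ∃ νm νp : ℝ, νm < 0 ∧ 0 < νp ∧ ∀ ν ∈ Icc νm (0 : ℝ), ∀ u : ℝ → ℝ × ℝ × ℝ,
      (∀ t ∈ Ici (0 : ℝ), HasDerivAt u (G ν (u t)) t) →
      u 0 ∈ S νp →
      (∃ t ≥ (0 : ℝ), u t ∉ S νp) ∨
        Filter.Tendsto u Filter.atTop (nhds ((0 : ℝ), (0 : ℝ), (0 : ℝ))) := by
  refine ⟨-1, 1/2000000, by norm_num, by norm_num, ?_⟩
  intro ν hν u hu hu0
  rw [or_iff_not_imp_left]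
  intro hleave
  push_neg at hleave
  -- notation
  set x : ℝ → ℝ := fun t => (u t).1 with hxdef
  set y : ℝ → ℝ := fun t => (u t).2.1 with hydef
  set z : ℝ → ℝ := fun t => (u t).2.2 with hzdef
  have hν0 : ν ≤ 0 := hν.2
  -- box bounds
  have hsq : Real.sqrt (2 * (1/2000000)) = 1/1000 := by
    rw [show (2 * (1/2000000 : ℝ)) = (1/1000)^2 by norm_num]
    exact Real.sqrt_sq (by norm_num)
  have hB3 : ((1:ℝ)/2000000) ^ ((3:ℝ)/2) ≤ (1/1000)^3 := by
    have h1 : ((1:ℝ)/2000000) ^ ((3:ℝ)/2)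
        = (((1:ℝ)/2000000) ^ ((1:ℝ)/2)) ^ (3:ℕ) := by
      rw [← Real.rpow_natCast (((1:ℝ)/2000000) ^ ((1:ℝ)/2)) 3, ← Real.rpow_mul (by norm_num)]
      norm_num
    have h2 : ((1:ℝ)/2000000) ^ ((1:ℝ)/2) = Real.sqrt (1/2000000) :=
      (Real.sqrt_eq_rpow _).symm
    have h3 : Real.sqrt (1/2000000) ≤ 1/1000 := by
      rw [show ((1:ℝ)/1000) = Real.sqrt ((1/1000)^2) from (Real.sqrt_sq (by norm_num)).symm]
      exact Real.sqrt_le_sqrt (by norm_num)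
    rw [h1, h2]
    exact pow_le_pow_left₀ (Real.sqrt_nonneg _) h3 3
  have hbox : ∀ t ≥ (0:ℝ), |x t| ≤ 1/1000 ∧ |y t| ≤ (1/1000:ℝ)^3 ∧ |z t| ≤ (1/1000:ℝ)^3 := by
    intro t ht
    have hmem := hleave t ht
    rw [S, Set.mem_prod, Set.mem_prod, Set.mem_Icc, Set.mem_Icc, Set.mem_Icc, hsq] at hmem
    obtain ⟨⟨hx1, hx2⟩, ⟨hy1, hy2⟩, hz1, hz2⟩ := hmem
    have hB0 : (0:ℝ) ≤ ((1:ℝ)/2000000) ^ ((3:ℝ)/2) := Real.rpow_nonneg (by norm_num) _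
    refine ⟨abs_le.2 ⟨hx1, hx2⟩, abs_le.2 ⟨by linarith, by linarith⟩,
      abs_le.2 ⟨by linarith, by linarith⟩⟩
  -- derivatives of the components
  have hdx : ∀ t ≥ (0:ℝ), HasDerivAt x
      (x t * (ν - x t ^ 2) + x t ^ 3 * (y t + z t) + x t * (y t ^ 2 + z t ^ 2) + y t * z t) t := by
    intro t ht
    have h := (hu t ht).hasFDerivAt.fst.hasDerivAt
    simp only [ContinuousLinearMap.coe_comp', Function.comp_apply,
      ContinuousLinearMap.smulRight_apply, ContinuousLinearMap.one_apply, one_smul,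
      ContinuousLinearMap.toSpanSingleton_apply,
      ContinuousLinearMap.coe_fst'] at h
    exact h
  have hdy : ∀ t ≥ (0:ℝ), HasDerivAt y
      (y t + (x t ^ 2 * (y t + z t) + x t ^ 4 + y t * z t)) t := by
    intro t ht
    have h := (hu t ht).hasFDerivAt.snd.fst.hasDerivAt
    simp only [ContinuousLinearMap.coe_comp', Function.comp_apply,
      ContinuousLinearMap.smulRight_apply, ContinuousLinearMap.one_apply, one_smul,
      ContinuousLinearMap.toSpanSingleton_apply,
      ContinuousLinearMap.coe_fst', ContinuousLinearMap.coe_snd'] at h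
    refine h.congr_deriv ?_
    simp only [G]
    ring
  have hdz : ∀ t ≥ (0:ℝ), HasDerivAt z
      (-z t + (x t ^ 2 * (y t + z t) + x t ^ 4 + y t * z t)) t := by
    intro t ht
    have h := (hu t ht).hasFDerivAt.snd.snd.hasDerivAt
    simp only [ContinuousLinearMap.coe_comp', Function.comp_apply,
      ContinuousLinearMap.smulRight_apply, ContinuousLinearMap.one_apply, one_smul,
      ContinuousLinearMap.toSpanSingleton_apply,
      ContinuousLinearMap.coe_fst', ContinuousLinearMap.coe_snd'] at h
    refine h.congr_deriv ?_
    simp only [G]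
    ring
  -- global crude bounds
  have hxd : ∀ t ≥ (0:ℝ), |x t| ≤ 1/1000 := fun t ht => (hbox t ht).1
  have hby : ∀ t ≥ (0:ℝ), |y t| ≤ 1 := fun t ht => le_trans (hbox t ht).2.1 (by norm_num)
  have hbz : ∀ t ≥ (0:ℝ), |z t| ≤ 1 := fun t ht => le_trans (hbox t ht).2.2 (by norm_num)
  -- base stage
  obtain ⟨T₀, hT₀, hyz₀⟩ := baseStage (T := (0:ℝ)) (d := 1/1000) (by norm_num) (le_refl _)
    hdy hdz hxd (fun t ht => (hbox t ht).2.1) (fun t ht => (hbox t ht).2.2)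
  -- bootstrap
  have main : ∀ n : ℕ, ∃ T ≥ (0:ℝ), (∀ t ≥ T, |x t| ≤ dseq n) ∧
      (∀ t ≥ T, |y t| ≤ 9 * dseq n ^ 4) ∧ (∀ t ≥ T, |z t| ≤ 9 * dseq n ^ 4) := by
    intro n
    induction n with
    | zero =>
      exact ⟨T₀, hT₀, fun t ht => by
          simpa [dseq] using hxd t (le_trans hT₀ ht),
        fun t ht => by simpa [dseq] using hyz₀.1 t ht,
        fun t ht => by simpa [dseq] using hyz₀.2 t ht⟩
    | succ n ih =>
      obtain ⟨T, hT, hxn, hyn, hzn⟩ := ih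
      obtain ⟨T', hT', hx', hy', hz'⟩ := fullStage hν0 (dseq_pos n) (dseq_le n)
        (fun t ht => hdx t (le_trans hT ht)) (fun t ht => hdy t (le_trans hT ht))
        (fun t ht => hdz t (le_trans hT ht))
        (fun t ht => hby t (le_trans hT ht)) (fun t ht => hbz t (le_trans hT ht))
        hxn hyn hzn
      exact ⟨T', le_trans hT hT', fun t ht => by simpa [dseq] using hx' t ht,
        fun t ht => by simpa [dseq] using hy' t ht,
        fun t ht => by simpa [dseq] using hz' t ht⟩
  -- limits
  have hsmall : ∀ ε > (0:ℝ), ∃ n : ℕ, 9 * dseq n < ε := by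
    intro ε hε
    obtain ⟨n, hn⟩ := exists_pow_lt_of_lt_one (show (0:ℝ) < ε/9 by linarith)
      (show (1/1000 : ℝ) < 1 by norm_num)
    refine ⟨n, ?_⟩
    have h1 : dseq n ≤ (1/1000 : ℝ)^(n+1) := dseq_small n
    have h2 : ((1:ℝ)/1000)^(n+1) ≤ (1/1000 : ℝ)^n :=
      pow_le_pow_of_le_one (by norm_num) (by norm_num) (Nat.le_succ n)
    nlinarith
  have hdseq4 : ∀ n, dseq n ^ 4 ≤ dseq n := fun n =>
    pow_le_of_le_one (le_of_lt (dseq_pos n)) (le_trans (dseq_le n) (by norm_num)) (by norm_num)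
  have hxlim : Filter.Tendsto x Filter.atTop (nhds 0) := by
    rw [Metric.tendsto_atTop]
    intro ε hε
    obtain ⟨n, hn⟩ := hsmall ε hε
    obtain ⟨T, hT, hxn, -, -⟩ := main n
    refine ⟨T, fun t ht => ?_⟩
    rw [Real.dist_eq, sub_zero]
    have := hxn t ht
    have := dseq_pos n
    linarith
  have hylim : Filter.Tendsto y Filter.atTop (nhds 0) := by
    rw [Metric.tendsto_atTop]
    intro ε hε
    obtain ⟨n, hn⟩ := hsmall ε hε
    obtain ⟨T, hT, -, hyn, -⟩ := main n
    refine ⟨T, fun t ht => ?_⟩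
    rw [Real.dist_eq, sub_zero]
    have h1 := hyn t ht
    have h2 := hdseq4 n
    linarith
  have hzlim : Filter.Tendsto z Filter.atTop (nhds 0) := by
    rw [Metric.tendsto_atTop]
    intro ε hε
    obtain ⟨n, hn⟩ := hsmall ε hε
    obtain ⟨T, hT, -, -, hzn⟩ := main n
    refine ⟨T, fun t ht => ?_⟩
    rw [Real.dist_eq, sub_zero]
    have h1 := hzn t ht
    have h2 := hdseq4 n
    linarith
  have hueq : u = fun t => (x t, y t, z t) := by
    funext t
    rfl
  rw [hueq]
  exact hxlim.prodMk_nhds (hylim.prodMk_nhds hzlim)
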